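/- arXiv:1912.05379 — 4 statements merged into one kernel-verified Lean document; each statement's English description precedes it below -/
import Mathlib

section
/- Let ε ≥ δ > 0, let A ⊆ ℝⁿ, and let S be an (ε,δ)-Delone set in ℝⁿ. Then there exists a subset S' ⊆ A that is δ-separated and ε-relatively dense in A (with the induced metric), and such that S' ∩ A_ε = S ∩ A_ε, where A_ε = {x ∈ ℝⁿ : the closed ball of radius ε around x is contained in A}. -/
open Metric

def IsSeparated' {X : Type*} [MetricSpace X] (δ : ℝ) (S : Set X) : Prop :=
  ∀ x ∈ S, ∀ y ∈ S, x ≠ y → δ ≤ dist x y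

/-- `S` is `ε`-relatively dense in the subset `A`. -/
def IsRelDenseIn {X : Type*} [MetricSpace X] (ε : ℝ) (A S : Set X) : Prop :=
  ∀ x ∈ A, ∃ y ∈ S, dist x y ≤ ε

/-- `S` is an `(ε,δ)`-Delone set of the whole space. -/
def IsDelone {X : Type*} [MetricSpace X] (ε δ : ℝ) (S : Set X) : Prop :=
  (∀ x : X, ∃ y ∈ S, dist x y ≤ ε) ∧ IsSeparated' δ S

theorem delone_restrict (n : ℕ) (ε δ : ℝ) (hδ : 0 < δ) (hεδ : δ ≤ ε)
    (A S : Set (EuclideanSpace ℝ (Fin n))) (hS : IsDelone ε δ S) :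
    ∃ S' : Set (EuclideanSpace ℝ (Fin n)), S' ⊆ A ∧ IsSeparated' δ S' ∧
      IsRelDenseIn ε A S' ∧
      S' ∩ {x | closedBall x ε ⊆ A} = S ∩ {x | closedBall x ε ⊆ A} := by
  set Aε : Set (EuclideanSpace ℝ (Fin n)) := {x | closedBall x ε ⊆ A} with hAε
  set base : Set (EuclideanSpace ℝ (Fin n)) := S ∩ A with hbase
  set P : Set (EuclideanSpace ℝ (Fin n)) := base ∪ (A \ Aε) with hP
  have hPA : P ⊆ A := by
    rintro z (⟨-, hz⟩ | ⟨hz, -⟩) <;> exact hz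
  set Fam : Set (Set (EuclideanSpace ℝ (Fin n))) := {T | T ⊆ P ∧ IsSeparated' δ T} with hFam
  have hbaseFam : base ∈ Fam := by
    refine ⟨Set.subset_union_left, ?_⟩
    intro x hx y hy hxy
    exact hS.2 x hx.1 y hy.1 hxy
  obtain ⟨M, hbaseM, hMmax⟩ := zorn_subset_nonempty Fam (fun c hc hchain hne => by
    refine ⟨⋃₀ c, ⟨?_, ?_⟩, fun s hs => Set.subset_sUnion_of_mem hs⟩
    · intro z hz
      obtain ⟨t, htc, hzt⟩ := hz
      exact (hc htc).1 hzt
    · intro x hx y hy hxy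
      obtain ⟨t1, ht1c, hx1⟩ := hx
      obtain ⟨t2, ht2c, hy2⟩ := hy
      rcases hchain.total ht1c ht2c with h | h
      · exact (hc ht2c).2 x (h hx1) y hy2 hxy
      · exact (hc ht1c).2 x hx1 y (h hy2) hxy) base hbaseFam
  have hMP : M ⊆ P := hMmax.prop.1
  have hMsep : IsSeparated' δ M := hMmax.prop.2
  refine ⟨M, fun z hz => hPA (hMP hz), hMsep, ?_, ?_⟩
  · -- relative density
    intro x hxA
    obtain ⟨y, hyS, hxy⟩ := hS.1 x
    by_cases hx : x ∈ Aε
    · have hyA : y ∈ A := hx (by simpa [dist_comm] using hxy)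
      exact ⟨y, hbaseM ⟨hyS, hyA⟩, hxy⟩
    · by_cases hnear : ∃ t ∈ M, dist x t < δ
      · obtain ⟨t, htM, ht⟩ := hnear
        exact ⟨t, htM, le_trans ht.le hεδ⟩
      · push_neg at hnear
        have hxP : x ∈ P := Or.inr ⟨hxA, hx⟩
        have hMx : insert x M ∈ Fam := by
          refine ⟨Set.insert_subset hxP hMP, ?_⟩
          intro a ha b hb hab
          rcases ha with rfl | ha
          · rcases hb with rfl | hb
            · exact absurd rfl hab
            · exact hnear b hb
          · rcases hb with rfl | hb
            · rw [dist_comm]; exact hnear a ha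
            · exact hMsep a ha b hb hab
        have : insert x M ⊆ M := hMmax.2 hMx (Set.subset_insert x M)
        exact ⟨x, this (Set.mem_insert x M), by simp [dist_self]; exact le_trans hδ.le hεδ⟩
  · -- intersection with Aε
    ext z
    constructor
    · rintro ⟨hzM, hzAε⟩
      rcases hMP hzM with ⟨hzS, -⟩ | ⟨-, hz⟩
      · exact ⟨hzS, hzAε⟩
      · exact absurd hzAε hz
    · rintro ⟨hzS, hzAε⟩
      have hzA : z ∈ A := hzAε (mem_closedBall_self (le_trans hδ.le hεδ))
      exact ⟨hbaseM ⟨hzS, hzA⟩, hzAε⟩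
end

section
/- Let ε ≥ δ > 0 and let A ⊆ ℝⁿ. For any subset N ⊆ A that is δ-separated and ε-relatively dense in A, there exists an (ε,δ)-Delone set S of ℝⁿ with S ∩ A = N. -/
open Metric

theorem delone_extend (n : ℕ) (ε δ : ℝ) (hδ : 0 < δ) (hεδ : δ ≤ ε)
    (A N : Set (EuclideanSpace ℝ (Fin n))) (hNA : N ⊆ A)
    (hsep : IsSeparated' δ N) (hdense : IsRelDenseIn ε A N) :
    ∃ S : Set (EuclideanSpace ℝ (Fin n)), IsDelone ε δ S ∧ S ∩ A = N := by
  set F : Set (Set (EuclideanSpace ℝ (Fin n))) :=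
    {S | N ⊆ S ∧ IsSeparated' δ S ∧ S ∩ A ⊆ N} with hF
  have hNF : N ∈ F := ⟨subset_rfl, hsep, Set.inter_subset_left⟩
  obtain ⟨M, hNM, hMF, hmax⟩ := zorn_subset_nonempty F (fun c hcF hchain hne => by
    refine ⟨⋃₀ c, ⟨?_, ?_, ?_⟩, fun s hs => Set.subset_sUnion_of_mem hs⟩
    · obtain ⟨s, hs⟩ := hne
      exact (hcF hs).1.trans (Set.subset_sUnion_of_mem hs)
    · rintro x ⟨s, hs, hxs⟩ y ⟨t, ht, hyt⟩ hxy
      rcases hchain.total hs ht with h | h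
      · exact (hcF ht).2.1 x (h hxs) y hyt hxy
      · exact (hcF hs).2.1 x hxs y (h hyt) hxy
    · rintro x ⟨⟨s, hs, hxs⟩, hxA⟩
      exact (hcF hs).2.2 ⟨hxs, hxA⟩) N hNF
  obtain ⟨hNM', hMsep, hMA⟩ := hMF
  refine ⟨M, ⟨?_, hMsep⟩, Set.Subset.antisymm hMA fun x hx => ⟨hNM' hx, hNA hx⟩⟩
  intro x
  by_contra h
  push_neg at h
  have hfar : ∀ y ∈ M, ε < dist x y := fun y hy => h y hy
  by_cases hxA : x ∈ A
  · obtain ⟨y, hyN, hxy⟩ := hdense x hxA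
    exact absurd hxy (not_le.2 (hfar y (hNM' hyN)))
  · have hxM : x ∉ M := fun hxM => by have := hfar x hxM; simp at this; linarith
    have : insert x M ∈ F := by
      refine ⟨hNM'.trans (Set.subset_insert _ _), ?_, ?_⟩
      · rintro a (rfl | ha) b (rfl | hb) hab
        · exact absurd rfl hab
        · exact hεδ.trans (hfar b hb).le
        · rw [dist_comm]; exact hεδ.trans (hfar a ha).le
        · exact hMsep a ha b hb hab
      · rintro z ⟨(rfl | hz), hzA⟩
        · exact absurd hzA hxA
        · exact hMA ⟨hz, hzA⟩
    have := hmax this (Set.subset_insert _ _)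
    exact hxM (this (Set.mem_insert x M))
end

section
/- Let S ⊆ ℝⁿ be locally finite (every bounded set contains finitely many points of S), let 0 < α, and let q ∈ ℝⁿ. Suppose there exists x ∈ S such that the closed ball of radius α centred at x − q is disjoint from S. Then there exists r > 0 such that every subset S' ⊆ ℝⁿ with (S, S') ∈ N_r also has a point y ∈ S' with the closed ball of radius α centred at y − q disjoint from S'. In other words, the set V_q of such sets is open in the local rubber topology. -/
open Metric Pointwise

/-- The entourage `N_r` on subsets of ℝⁿ for the local rubber topology. -/
def Nrel (n : ℕ) (r : ℝ) (S S' : Set (EuclideanSpace ℝ (Fin n))) : Prop :=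
  S ∩ ball (0 : EuclideanSpace ℝ (Fin n)) r ⊆ S' + ball (0 : EuclideanSpace ℝ (Fin n)) (1 / r) ∧
  S' ∩ ball (0 : EuclideanSpace ℝ (Fin n)) r ⊆ S + ball (0 : EuclideanSpace ℝ (Fin n)) (1 / r)

theorem Vq_open (n : ℕ) (S : Set (EuclideanSpace ℝ (Fin n)))
    (hloc : ∀ B : Set (EuclideanSpace ℝ (Fin n)), Bornology.IsBounded B → (S ∩ B).Finite)
    (α : ℝ) (hα : 0 < α) (q : EuclideanSpace ℝ (Fin n))
    (hx : ∃ x ∈ S, closedBall (x - q) α ∩ S = ∅) :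
    ∃ r : ℝ, 0 < r ∧ ∀ S' : Set (EuclideanSpace ℝ (Fin n)),
      Nrel n r S S' → ∃ y ∈ S', closedBall (y - q) α ∩ S' = ∅ := by
  classical
  obtain ⟨x, hxS, hxball⟩ := hx
  have hF : (S ∩ closedBall (x - q) (α + 1)).Finite :=
    hloc _ isBounded_closedBall
  -- find ε > 0 with S ∩ closedBall (x-q) (α + 2ε) = ∅
  obtain ⟨ε, hε0, hε1, hεball⟩ :
      ∃ ε : ℝ, 0 < ε ∧ ε ≤ 1 / 2 ∧ S ∩ closedBall (x - q) (α + 2 * ε) = ∅ := by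
    by_cases hne : (S ∩ closedBall (x - q) (α + 1)).Nonempty
    · have htne : hF.toFinset.Nonempty := by
        simpa [Set.Finite.toFinset_nonempty] using hne
      set d := hF.toFinset.inf' htne (fun s => dist s (x - q)) with hd_def
      have hd : α < d := by
        obtain ⟨s, hs, hds⟩ :=
          hF.toFinset.exists_mem_eq_inf' htne (fun s => dist s (x - q))
        have hsS : s ∈ S ∩ closedBall (x - q) (α + 1) := by
          simpa using hs
        have hns : s ∉ closedBall (x - q) α := by
          intro h
          exact (Set.eq_empty_iff_forall_notMem.mp hxball s) ⟨h, hsS.1⟩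
        rw [hd_def, hds]
        simpa [mem_closedBall, not_le] using hns
      refine ⟨min (1 / 2) ((d - α) / 4), ?_, min_le_left _ _, ?_⟩
      · exact lt_min (by norm_num) (by linarith)
      · apply Set.eq_empty_iff_forall_notMem.mpr
        rintro s ⟨hsS, hsb⟩
        have h2m : 2 * min (1 / 2) ((d - α) / 4) ≤ 1 := by
          have := min_le_left (1 / 2) ((d - α) / 4); linarith
        have h2m' : 2 * min (1 / 2) ((d - α) / 4) ≤ (d - α) / 2 := by
          have := min_le_right (1 / 2) ((d - α) / 4); linarith
        have hdist : dist s (x - q) ≤ α + 2 * min (1 / 2) ((d - α) / 4) :=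
          mem_closedBall.mp hsb
        have hst : s ∈ hF.toFinset := by
          simp only [Set.Finite.mem_toFinset]
          exact ⟨hsS, mem_closedBall.mpr (by linarith)⟩
        have hds : d ≤ dist s (x - q) :=
          Finset.inf'_le _ hst
        linarith
    · exact ⟨1 / 2, by norm_num, le_refl _,
        by rw [Set.not_nonempty_iff_eq_empty] at hne; simpa using hne⟩
  set r : ℝ := max (1 / ε) (‖x‖ + ‖q‖ + α + 2) with hr_def
  have hr0 : 0 < r := lt_max_of_lt_left (by positivity)
  have hrε : 1 / r ≤ ε := by
    rw [div_le_iff₀ hr0]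
    calc (1 : ℝ) = ε * (1 / ε) := by field_simp
    _ ≤ ε * r := by
        apply mul_le_mul_of_nonneg_left (le_max_left _ _) hε0.le
  have hr2 : ‖x‖ + ‖q‖ + α + 2 ≤ r := le_max_right _ _
  refine ⟨r, hr0, fun S' ⟨h1, h2⟩ => ?_⟩
  have hxmem : x ∈ S ∩ ball (0 : EuclideanSpace ℝ (Fin n)) r := by
    refine ⟨hxS, ?_⟩
    rw [mem_ball, dist_zero_right]
    have : (0:ℝ) ≤ ‖q‖ := norm_nonneg _
    linarith
  obtain ⟨y, hyS', b, hb, hyb⟩ := h1 hxmem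
  have hxy : dist x y < 1 / r := by
    rw [dist_eq_norm]
    have : x - y = b := by rw [← hyb]; module
    rw [this]
    simpa [dist_zero_right] using hb
  have hεhalf : (1:ℝ) / r ≤ 1 / 2 := le_trans hrε hε1
  refine ⟨y, hyS', ?_⟩
  apply Set.eq_empty_iff_forall_notMem.mpr
  rintro z ⟨hz1, hz2⟩
  have hz1' : dist z (y - q) ≤ α := mem_closedBall.mp hz1
  have hzball : z ∈ ball (0 : EuclideanSpace ℝ (Fin n)) r := by
    rw [mem_ball, dist_zero_right]
    have h1' : ‖z‖ ≤ dist z (y - q) + ‖y - q‖ := by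
      have := dist_triangle z (y - q) 0
      simpa [dist_zero_right] using this
    have h2' : ‖y - q‖ ≤ ‖y‖ + ‖q‖ := norm_sub_le _ _
    have h3' : ‖y‖ ≤ ‖x‖ + dist x y := by
      rw [dist_eq_norm, norm_sub_rev]
      exact norm_le_norm_add_norm_sub' y x
    linarith
  obtain ⟨s, hsS, b', hb', hsb'⟩ := h2 ⟨hz2, hzball⟩
  have hzs : dist z s < 1 / r := by
    rw [dist_eq_norm]
    have : z - s = b' := by rw [← hsb']; module
    rw [this]
    simpa [dist_zero_right] using hb'
  have hyx : dist (y - q) (x - q) < 1 / r := by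
    rw [dist_eq_norm]
    have : y - q - (x - q) = -(x - y) := by abel
    rw [this, norm_neg, ← dist_eq_norm]
    exact hxy
  have hfinal : dist s (x - q) ≤ α + 2 * ε := by
    have := dist_triangle s z (x - q)
    have := dist_triangle z (y - q) (x - q)
    have hsz : dist s z = dist z s := dist_comm _ _
    linarith
  exact (Set.eq_empty_iff_forall_notMem.mp hεball s)
    ⟨hsS, mem_closedBall.mpr hfinal⟩
end

section
/- Let ε ≥ δ > 0 and identify the n-torus 𝕋ⁿ = ℝⁿ/(2(m+δ+ε)ℤ)ⁿ with quotient map π : ℝⁿ → 𝕋ⁿ. If N ⊆ [−m−ε, m+ε]ⁿ is δ-separated and ε-relatively dense in [−m−ε, m+ε]ⁿ, then π(N) is δ-separated in 𝕋ⁿ (with the quotient flat metric) and ε-relatively dense in π([−m−ε, m+ε]ⁿ). -/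
open Metric

/-- The lattice vector `L·k ∈ ℝⁿ` associated to `k ∈ ℤⁿ`. -/
noncomputable def latVec (n : ℕ) (L : ℝ) (k : Fin n → ℤ) : EuclideanSpace ℝ (Fin n) :=
  (EuclideanSpace.equiv (Fin n) ℝ).symm (fun i => L * (k i : ℝ))

/-- The quotient (flat torus) distance on `ℝⁿ/(L·ℤ)ⁿ`, computed on representatives. -/
noncomputable def torusDist (n : ℕ) (L : ℝ) (x y : EuclideanSpace ℝ (Fin n)) : ℝ :=
  sInf {d : ℝ | ∃ k : Fin n → ℤ, d = dist x (y + latVec n L k)}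

lemma latVec_apply (n : ℕ) (L : ℝ) (k : Fin n → ℤ) (i : Fin n) :
    latVec n L k i = L * (k i : ℝ) := rfl

lemma latVec_zero (n : ℕ) (L : ℝ) : latVec n L 0 = 0 := by
  ext i; simp [latVec_apply]

lemma dist_coord_le (n : ℕ) (x y : EuclideanSpace ℝ (Fin n)) (i : Fin n) :
    |x i - y i| ≤ dist x y := by
  rw [EuclideanSpace.dist_eq]
  have h1 : dist (x i) (y i) ^ 2 ≤ ∑ j, dist (x j) (y j) ^ 2 :=
    Finset.single_le_sum (f := fun j => dist (x j) (y j) ^ 2)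
      (fun j _ => sq_nonneg _) (Finset.mem_univ i)
  calc |x i - y i| = dist (x i) (y i) := (Real.dist_eq _ _).symm
    _ = Real.sqrt (dist (x i) (y i) ^ 2) := (Real.sqrt_sq dist_nonneg).symm
    _ ≤ Real.sqrt (∑ j, dist (x j) (y j) ^ 2) := Real.sqrt_le_sqrt h1

/-- If `N ⊆ [−m−ε, m+ε]ⁿ` is `δ`-separated and `ε`-relatively dense in the cube, then its
projection to the torus `ℝⁿ/(2(m+δ+ε)ℤ)ⁿ` is `δ`-separated and `ε`-relatively dense in the
projection of the cube. -/
theorem torus_projection (n : ℕ) (ε δ m : ℝ) (hδ : 0 < δ) (hεδ : δ ≤ ε) (hm : 0 ≤ m)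
    (N : Set (EuclideanSpace ℝ (Fin n)))
    (hNc : N ⊆ {x : EuclideanSpace ℝ (Fin n) | ∀ i, |x i| ≤ m + ε})
    (hsep : ∀ x ∈ N, ∀ y ∈ N, x ≠ y → δ ≤ dist x y)
    (hdense : ∀ x : EuclideanSpace ℝ (Fin n), (∀ i, |x i| ≤ m + ε) →
      ∃ y ∈ N, dist x y ≤ ε) :
    (∀ x ∈ N, ∀ y ∈ N,
        (¬ ∃ k : Fin n → ℤ, y = x + latVec n (2 * (m + δ + ε)) k) →
        δ ≤ torusDist n (2 * (m + δ + ε)) x y) ∧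
    (∀ x : EuclideanSpace ℝ (Fin n), (∀ i, |x i| ≤ m + ε) →
        ∃ y ∈ N, torusDist n (2 * (m + δ + ε)) x y ≤ ε) := by
  set L : ℝ := 2 * (m + δ + ε) with hLdef
  constructor
  · intro x hx y hy hk
    refine le_csInf ⟨dist x (y + latVec n L 0), ⟨0, rfl⟩⟩ ?_
    rintro d ⟨k, rfl⟩
    by_cases hk0 : k = 0
    · subst hk0
      rw [latVec_zero, add_zero]
      apply hsep x hx y hy
      intro hxy
      exact hk ⟨0, by rw [latVec_zero, add_zero, hxy]⟩
    · obtain ⟨i, hi⟩ : ∃ i, k i ≠ 0 := by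
        by_contra h; push_neg at h; exact hk0 (funext h)
      have h1 : (1:ℝ) ≤ |(k i : ℝ)| := by
        have : (1:ℤ) ≤ |k i| := Int.one_le_abs hi
        exact_mod_cast this
      have hco := dist_coord_le n x (y + latVec n L k) i
      have hyx : (y + latVec n L k) i = y i + L * (k i : ℝ) := rfl
      have hxb := hNc hx i
      have hyb := hNc hy i
      have hLk : L ≤ |L * (k i : ℝ)| := by
        rw [abs_mul]
        have hLpos : 0 ≤ L := by simp only [hLdef]; linarith
        rw [abs_of_nonneg hLpos]
        nlinarith
      have habs : |(L * (k i : ℝ))| - |x i - y i| ≤ |(x i - y i) - L * (k i : ℝ)| := by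
        have := abs_sub_abs_le_abs_sub (L * (k i : ℝ)) (x i - y i)
        have h2 : |L * (k i : ℝ) - (x i - y i)| = |(x i - y i) - L * (k i : ℝ)| :=
          abs_sub_comm _ _
        linarith
      have hxy : |x i - y i| ≤ 2 * (m + ε) := by
        have := abs_sub (x i) (y i)
        calc |x i - y i| ≤ |x i| + |y i| := abs_sub _ _
          _ ≤ 2 * (m + ε) := by linarith
      have hkey : 2 * δ ≤ |x i - (y + latVec n L k) i| := by
        rw [hyx]
        have : x i - (y i + L * (k i : ℝ)) = (x i - y i) - L * (k i : ℝ) := by ring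
        rw [this]
        have : 2 * δ = L - 2 * (m + ε) := by rw [hLdef]; ring
        linarith
      linarith
  · intro x hxc
    obtain ⟨y, hy, hd⟩ := hdense x hxc
    refine ⟨y, hy, ?_⟩
    have hmem : dist x y ∈ {d : ℝ | ∃ k : Fin n → ℤ, d = dist x (y + latVec n L k)} :=
      ⟨0, by rw [latVec_zero, add_zero]⟩
    have hbdd : BddBelow {d : ℝ | ∃ k : Fin n → ℤ, d = dist x (y + latVec n L k)} :=
      ⟨0, by rintro d ⟨k, rfl⟩; exact dist_nonneg⟩
    exact le_trans (csInf_le hbdd hmem) hd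
end
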